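/- Consider the five demand points $a_1=(0,0)$, $a_2=(1,0)$, $a_3=(3.25,0)$, $a_4=(5,0)$, $a_5=(6,0)$ in $\mathbb{R}^2$ with Euclidean distance, coverage radius $R = 0.5$ for each point, and interconnection radius $r = 2.5$. Then the three centers $X_1 = (0.5, 0)$, $X_2 = (3, 0)$, $X_3 = (5.5, 0)$ satisfy: $\|X_1 - a_1\| \le R$, $\|X_1 - a_2\| \le R$, $\|X_2 - a_3\| \le R$, $\|X_3 - a_4\| \le R$, $\|X_3 - a_5\| \le R$, $\|X_1 - X_2\| \le r$, and $\|X_2 - X_3\| \le r$; moreover $X_2$ does not belong to the Circle Intersection Point set $\{a_1,\ldots,a_5\} \cup \{(0.5,0),(5.5,0)\}$. -/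

import Mathlib

open Metric Set

noncomputable def pt (x y : ℝ) : EuclideanSpace ℝ (Fin 2) :=
  (EuclideanSpace.equiv (Fin 2) ℝ).symm ![x, y]

lemma pt_norm (x y : ℝ) : ‖pt x 0 - pt y 0‖ = |x - y| := by
  have : pt x 0 - pt y 0 = pt (x - y) 0 := by
    ext i
    fin_cases i <;> simp [pt]
  rw [this, EuclideanSpace.norm_eq]
  have : ∀ i : Fin 2, ‖(pt (x - y) 0) i‖ ^ 2 = ![(x-y)^2, 0] i := by
    intro i; fin_cases i <;> simp [pt, sq_abs]
  rw [Finset.sum_congr rfl (fun i _ => this i)]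
  simp [Fin.sum_univ_two, Real.sqrt_sq_eq_abs]

lemma pt_inj {x y : ℝ} (h : pt x 0 = pt y 0) : x = y := by
  have := congrArg (fun v : EuclideanSpace ℝ (Fin 2) => v 0) h
  simpa [pt] using this

theorem stmt10 :
    let a₁ := pt 0 0
    let a₂ := pt 1 0
    let a₃ := pt 3.25 0
    let a₄ := pt 5 0
    let a₅ := pt 6 0
    let X₁ := pt 0.5 0
    let X₂ := pt 3 0
    let X₃ := pt 5.5 0
    let R : ℝ := 0.5
    let r : ℝ := 2.5
    ‖X₁ - a₁‖ ≤ R ∧ ‖X₁ - a₂‖ ≤ R ∧ ‖X₂ - a₃‖ ≤ R ∧ ‖X₃ - a₄‖ ≤ R ∧ ‖X₃ - a₅‖ ≤ R ∧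
      ‖X₁ - X₂‖ ≤ r ∧ ‖X₂ - X₃‖ ≤ r ∧
      X₂ ∉ ({a₁, a₂, a₃, a₄, a₅, pt 0.5 0, pt 5.5 0} :
        Set (EuclideanSpace ℝ (Fin 2))) := by
  refine ⟨?_, ?_, ?_, ?_, ?_, ?_, ?_, ?_⟩
  case refine_8 =>
    simp only [Set.mem_insert_iff, Set.mem_singleton_iff]
    rintro (h|h|h|h|h|h|h) <;> exact absurd (pt_inj h) (by norm_num)
  all_goals simp only [pt_norm]; norm_num [abs_le]
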